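/- arXiv:1001.5227 — 6 statements merged into one kernel-verified Lean document; each statement's English description precedes it below -/
import Mathlib

section
/- Let Δt := (t+σ)(cosh ρ − 1) − τ + sinh ρ · √((t+σ)² + ν²). Then the separation vector n(Δt) between the emission event g(t) and the return event is lightlike: η(n(Δt), n(Δt)) = 0. In other words, Δt is the return time of the returning lightray associated with the holonomy (v, a): a lightray emitted by the observer at eigentime t reaches the image of the observer's worldline under the holonomy after eigentime Δt. -/
open Matrix Real

noncomputable section

/-- The Minkowski inner product on ℝ³, of signature (−,+,+). -/
def eta (x y : Fin 3 → ℝ) : ℝ := -(x 0 * y 0) + x 1 * y 1 + x 2 * y 2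

/-- The Minkowski metric as a 3×3 matrix, η = diag(−1,1,1). -/
def etaMat : Matrix (Fin 3) (Fin 3) ℝ := Matrix.diagonal ![(-1 : ℝ), 1, 1]

/-- Membership in the proper orthochronous Lorentz group SO⁺(2,1):
vᵀηv = η, det v = 1, v₀₀ > 0. -/
def IsPOLorentz (v : Matrix (Fin 3) (Fin 3) ℝ) : Prop :=
  vᵀ * etaMat * v = etaMat ∧ v.det = 1 ∧ 0 < v 0 0

/-- The Minkowski cross product x∧y, the unique vector with
η(x∧y, z) = det(x,y,z) for all z. -/
def mcross (x y : Fin 3 → ℝ) : Fin 3 → ℝ :=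
  ![-(x 1 * y 2 - x 2 * y 1), x 2 * y 0 - x 0 * y 2, x 0 * y 1 - x 1 * y 0]

/-- the separation vector n(Δt) with
Δt = (t+σ)(cosh ρ − 1) − τ + sinh ρ·√((t+σ)² + ν²) is lightlike. -/
theorem return_time_is_lightlike
    (x x₀ a : Fin 3 → ℝ) (v : Matrix (Fin 3) (Fin 3) ℝ)
    (hx : eta x x = -1) (hxfut : 0 < x 0)
    (hv : IsPOLorentz v) (hvx : v.mulVec x ≠ x)
    (ρ σ τ ν t : ℝ) (hρ : 0 < ρ)
    (hcosh : Real.cosh ρ = -eta x (v.mulVec x))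
    (hdec : v.mulVec x₀ + a - x₀
      = σ • (v.mulVec x - x) + τ • v.mulVec x + ν • mcross x (v.mulVec x))
    (n : ℝ → Fin 3 → ℝ)
    (hn : ∀ Δ, n Δ = (t + Δ) • v.mulVec x - t • x + (v.mulVec x₀ + a - x₀))
    (Δt : ℝ)
    (hΔt : Δt = (t + σ) * (Real.cosh ρ - 1) - τ
      + Real.sinh ρ * Real.sqrt ((t + σ) ^ 2 + ν ^ 2)) :
    eta (n Δt) (n Δt) = 0 := by
  set y := v.mulVec x with hy
  -- entry equations of the Lorentz condition
  have hE : ∀ i j : Fin 3,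
      -(v 0 i * v 0 j) + v 1 i * v 1 j + v 2 i * v 2 j = etaMat i j := by
    intro i j
    have := congrFun (congrFun hv.1 i) j
    simp [Matrix.mul_apply, etaMat, Matrix.diagonal, Fin.sum_univ_three] at this ⊢
    fin_cases i <;> fin_cases j <;> simp_all
  have hyc : ∀ i : Fin 3, y i = v i 0 * x 0 + v i 1 * x 1 + v i 2 * x 2 := by
    intro i
    simp [hy, Matrix.mulVec, dotProduct, Fin.sum_univ_three]
  have e00 := hE 0 0; have e11 := hE 1 1; have e22 := hE 2 2
  have e01 := hE 0 1; have e02 := hE 0 2; have e12 := hE 1 2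
  simp [etaMat, Matrix.diagonal] at e00 e11 e22 e01 e02 e12
  have hx' : -(x 0 * x 0) + x 1 * x 1 + x 2 * x 2 = -1 := hx
  have hyy : eta y y = -1 := by
    simp only [eta, hyc]
    linear_combination (x 0)^2 * e00 + (x 1)^2 * e11 + (x 2)^2 * e22
      + 2 * x 0 * x 1 * e01 + 2 * x 0 * x 2 * e02 + 2 * x 1 * x 2 * e12
      + hx'
  set w := mcross x y with hw
  have hw0 : w 0 = -(x 1 * y 2 - x 2 * y 1) := rfl
  have hw1 : w 1 = x 2 * y 0 - x 0 * y 2 := rfl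
  have hw2 : w 2 = x 0 * y 1 - x 1 * y 0 := rfl
  have hxy : eta x y = -Real.cosh ρ := by rw [hcosh]; ring
  have hxw : eta x w = 0 := by simp [eta, hw0, hw1, hw2]; ring
  have hyw : eta y w = 0 := by simp [eta, hw0, hw1, hw2]; ring
  have hww : eta w w = (eta x y)^2 - eta x x * eta y y := by
    simp [eta, hw0, hw1, hw2]; ring
  rw [hxy, hx, hyy] at hww
  -- the separation vector
  set A := t + Δt + σ + τ with hA
  set B := t + σ with hB
  have hnv : n Δt = A • y - B • x + ν • w := by
    rw [hn, hdec]
    funext i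
    simp [Pi.add_apply, Pi.sub_apply, Pi.smul_apply, smul_eq_mul, hA, hB]
    ring
  set R := Real.sqrt ((t + σ) ^ 2 + ν ^ 2) with hR
  have hR2 : R ^ 2 = (t + σ) ^ 2 + ν ^ 2 := Real.sq_sqrt (by positivity)
  have hAval : A = B * Real.cosh ρ + Real.sinh ρ * R := by
    rw [hA, hΔt, hB]; ring
  have hcs : Real.cosh ρ ^ 2 - Real.sinh ρ ^ 2 = 1 := Real.cosh_sq_sub_sinh_sq ρ
  -- expand eta bilinearly
  have hexp : eta (n Δt) (n Δt)
      = A^2 * eta y y + B^2 * eta x x + ν^2 * eta w w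
        - 2*A*B * eta x y + 2*A*ν * eta y w - 2*B*ν * eta x w := by
    rw [hnv]; simp [eta]; ring
  rw [hexp, hyy, hx, hww, hxy, hyw, hxw, hAval]
  have hν : ν ^ 2 = R ^ 2 - B ^ 2 := by rw [hR2, hB]; ring
  rw [hν]
  linear_combination R ^ 2 * hcs
end
end

section
/- Assume that the emission event g(t) and its image under the holonomy are spacelike separated, i.e. η(n(0), n(0)) > 0. Then there is exactly one Δ > 0 with η(n(Δ), n(Δ)) = 0, and it is given by Δ = (t+σ)(cosh ρ − 1) − τ + sinh ρ · √((t+σ)² + ν²). In particular the return time is positive and uniquely determined. -/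
open Matrix Real

noncomputable section

/-- if the emission event and its holonomy image are spacelike
separated, there is exactly one Δ > 0 with η(n(Δ),n(Δ)) = 0, given by the
return time formula. -/
theorem return_time_unique
    (x x₀ a : Fin 3 → ℝ) (v : Matrix (Fin 3) (Fin 3) ℝ)
    (hx : eta x x = -1) (hxfut : 0 < x 0)
    (hv : IsPOLorentz v) (hvx : v.mulVec x ≠ x)
    (ρ σ τ ν t : ℝ) (hρ : 0 < ρ)
    (hcosh : Real.cosh ρ = -eta x (v.mulVec x))
    (hdec : v.mulVec x₀ + a - x₀
      = σ • (v.mulVec x - x) + τ • v.mulVec x + ν • mcross x (v.mulVec x))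
    (n : ℝ → Fin 3 → ℝ)
    (hn : ∀ Δ, n Δ = (t + Δ) • v.mulVec x - t • x + (v.mulVec x₀ + a - x₀))
    (hspace : 0 < eta (n 0) (n 0))
    (Δt : ℝ)
    (hΔt : Δt = (t + σ) * (Real.cosh ρ - 1) - τ
      + Real.sinh ρ * Real.sqrt ((t + σ) ^ 2 + ν ^ 2)) :
    (0 < Δt ∧ eta (n Δt) (n Δt) = 0) ∧
      ∀ Δ : ℝ, 0 < Δ → eta (n Δ) (n Δ) = 0 → Δ = Δt := by

  obtain ⟨hv1, -, -⟩ := hv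
  set w := v.mulVec x with hw_def
  -- invariance of eta under v
  have h1 : ∀ p q : Fin 3 → ℝ, eta p q = p ⬝ᵥ etaMat *ᵥ q := by
    intro p q
    simp [eta, etaMat, Matrix.mulVec, dotProduct, Fin.sum_univ_three, Matrix.diagonal]
  have hww : eta w w = -1 := by
    rw [hw_def]
    calc eta (v.mulVec x) (v.mulVec x) = eta x x := by
          rw [h1, h1, Matrix.mulVec_mulVec, Matrix.dotProduct_mulVec,
            ← Matrix.vecMul_transpose, Matrix.vecMul_vecMul, ← Matrix.mul_assoc, hv1,
            ← Matrix.dotProduct_mulVec]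
      _ = -1 := hx
  set C := Real.cosh ρ with hC_def
  set S := Real.sinh ρ with hS_def
  have hxw : eta x w = -C := by rw [hcosh]; ring
  have hC1 : 1 < C := Real.one_lt_cosh.mpr (ne_of_gt hρ)
  have hSpos : 0 < S := Real.sinh_pos_iff.mpr hρ
  have hS2 : S ^ 2 = C ^ 2 - 1 := by
    rw [hS_def, hC_def, Real.sinh_sq]
  set B := t + σ with hB_def
  set R := Real.sqrt (B ^ 2 + ν ^ 2) with hR_def
  clear_value C S R
  have hRnn : 0 ≤ R := by rw [hR_def]; exact Real.sqrt_nonneg _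
  have hR2 : R ^ 2 = B ^ 2 + ν ^ 2 := by rw [hR_def]; exact Real.sq_sqrt (by positivity)
  -- the key quadratic formula for eta (n Δ) (n Δ)
  have key : ∀ Δ : ℝ, eta (n Δ) (n Δ)
      = S ^ 2 * (B ^ 2 + ν ^ 2) - (Δ + τ - B * (C - 1)) ^ 2 := by
    intro Δ
    rw [hn Δ, hdec]
    simp only [eta, mcross, Pi.add_apply, Pi.sub_apply, Pi.smul_apply, smul_eq_mul,
      Matrix.cons_val_zero, Matrix.cons_val_one, Matrix.head_cons,
      Matrix.cons_val_two, Matrix.tail_cons] at hx hww hxw ⊢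
    linear_combination ((t+Δ+σ+τ)^2 - (-(x 0 * x 0) + x 1 * x 1 + x 2 * x 2)*ν^2) * hww
      + ((t+σ)^2 + ν^2) * hx
      + (-2*(t+Δ+σ+τ)*(t+σ) + ν^2*((-(x 0 * w 0) + x 1 * w 1 + x 2 * w 2) - C)) * hxw
      - (ν^2 + (t+σ)^2) * hS2
  have hΔt' : Δt = B * (C - 1) - τ + S * R := hΔt
  -- from hspace : |τ - B(C-1)| < S*R
  have hf0 := key 0
  rw [hf0] at hspace
  have hSR2 : S ^ 2 * (B ^ 2 + ν ^ 2) = (S * R) ^ 2 := by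
    rw [mul_pow, hR2]
  rw [hSR2] at hspace
  have habs1 : τ - B * (C - 1) < S * R := by nlinarith [sq_nonneg (τ - B * (C-1) + S * R), mul_nonneg hSpos.le hRnn]
  have habs2 : -(S * R) < τ - B * (C - 1) := by nlinarith [sq_nonneg (τ - B * (C-1) - S * R), mul_nonneg hSpos.le hRnn]
  have hΔtpos : 0 < Δt := by rw [hΔt']; linarith
  refine ⟨⟨hΔtpos, ?_⟩, ?_⟩
  · rw [key Δt, hSR2, hΔt']
    ring
  · intro Δ hΔpos hΔ0
    rw [key Δ, hSR2] at hΔ0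
    have hcases : (Δ + τ - B * (C - 1) - S * R) * (Δ + τ - B * (C - 1) + S * R) = 0 := by
      linear_combination -hΔ0
    rcases mul_eq_zero.mp hcases with h | h
    · rw [hΔt']; linarith
    · exfalso; linarith
end
end

section
/- Assume (t+σ)² + ν² > 0, and let Δt = (t+σ)(cosh ρ − 1) − τ + sinh ρ·√((t+σ)² + ν²) be the return time. Then the relative frequency of the returning and the emitted lightray, defined as the quotient f_r/f_e = η(n(Δt), v·x) / η(n(Δt), x), is given by f_r/f_e = √((t+σ)² + ν²) / ( cosh ρ · √((t+σ)² + ν²) + sinh ρ · (t+σ) ). -/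
open Matrix Real

noncomputable section

lemma eta_lorentz_inv (v : Matrix (Fin 3) (Fin 3) ℝ) (h : vᵀ * etaMat * v = etaMat)
    (p q : Fin 3 → ℝ) : eta (v.mulVec p) (v.mulVec q) = eta p q := by
  have e : ∀ i j, (vᵀ * etaMat * v) i j = etaMat i j := fun i j =>
    congrFun (congrFun h i) j
  have e00 := e 0 0; have e01 := e 0 1; have e02 := e 0 2
  have e10 := e 1 0; have e11 := e 1 1; have e12 := e 1 2
  have e20 := e 2 0; have e21 := e 2 1; have e22 := e 2 2
  simp [Matrix.mul_apply, Matrix.transpose_apply, etaMat, Fin.sum_univ_three,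
    Matrix.diagonal_apply] at e00 e01 e02 e10 e11 e12 e20 e21 e22
  simp [eta, Matrix.mulVec, dotProduct, Fin.sum_univ_three]
  linear_combination p 0 * q 0 * e00 + p 0 * q 1 * e01 + p 0 * q 2 * e02 +
    p 1 * q 0 * e10 + p 1 * q 1 * e11 + p 1 * q 2 * e12 +
    p 2 * q 0 * e20 + p 2 * q 1 * e21 + p 2 * q 2 * e22

/-- the relative frequency of returning and emitted lightray. -/
theorem relative_frequency_formula
    (x x₀ a : Fin 3 → ℝ) (v : Matrix (Fin 3) (Fin 3) ℝ)
    (hx : eta x x = -1) (hxfut : 0 < x 0)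
    (hv : IsPOLorentz v) (hvx : v.mulVec x ≠ x)
    (ρ σ τ ν t : ℝ) (hρ : 0 < ρ)
    (hcosh : Real.cosh ρ = -eta x (v.mulVec x))
    (hdec : v.mulVec x₀ + a - x₀
      = σ • (v.mulVec x - x) + τ • v.mulVec x + ν • mcross x (v.mulVec x))
    (n : ℝ → Fin 3 → ℝ)
    (hn : ∀ Δ, n Δ = (t + Δ) • v.mulVec x - t • x + (v.mulVec x₀ + a - x₀))
    (hpos : 0 < (t + σ) ^ 2 + ν ^ 2)
    (Δt : ℝ)
    (hΔt : Δt = (t + σ) * (Real.cosh ρ - 1) - τ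
      + Real.sinh ρ * Real.sqrt ((t + σ) ^ 2 + ν ^ 2)) :
    eta (n Δt) (v.mulVec x) / eta (n Δt) x
      = Real.sqrt ((t + σ) ^ 2 + ν ^ 2)
        / (Real.cosh ρ * Real.sqrt ((t + σ) ^ 2 + ν ^ 2)
            + Real.sinh ρ * (t + σ)) := by
  have hww : eta (v.mulVec x) (v.mulVec x) = -1 := by
    rw [eta_lorentz_inv v hv.1, hx]
  have hxw : eta x (v.mulVec x) = -Real.cosh ρ := by linarith [hcosh]
  have hcs : Real.cosh ρ ^ 2 - Real.sinh ρ ^ 2 = 1 := Real.cosh_sq_sub_sinh_sq ρ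
  have hs : 0 < Real.sinh ρ := Real.sinh_pos_iff.mpr hρ
  have hcgts : 0 < Real.cosh ρ - Real.sinh ρ := by
    rw [Real.cosh_sub_sinh]; positivity
  set S := Real.sqrt ((t + σ) ^ 2 + ν ^ 2) with hSdef
  have hSpos : 0 < S := Real.sqrt_pos.mpr hpos
  have habs : |t + σ| ≤ S := by
    rw [hSdef, ← Real.sqrt_sq_eq_abs]
    exact Real.sqrt_le_sqrt (by nlinarith [sq_nonneg ν])
  have hTS : 0 ≤ (t + σ) + S := by
    have := neg_abs_le (t + σ); linarith
  have hden : 0 < Real.cosh ρ * S + Real.sinh ρ * (t + σ) := by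
    nlinarith [mul_pos hcgts hSpos, mul_nonneg hs.le hTS]
  have h1 : eta (n Δt) (v.mulVec x) = -(Real.sinh ρ * S) := by
    rw [hn, hdec]
    simp only [eta, mcross, Pi.add_apply, Pi.sub_apply, Pi.smul_apply,
      smul_eq_mul, Matrix.cons_val_zero, Matrix.cons_val_one, Matrix.head_cons,
      Matrix.cons_val_two, Matrix.tail_cons]
    simp only [eta] at hww hxw
    linear_combination (t + Δt + σ + τ) * hww + (-(t + σ)) * hxw + (-1) * hΔt
  have h2 : eta (n Δt) x
      = -(Real.sinh ρ * (Real.sinh ρ * (t + σ) + Real.cosh ρ * S)) := by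
    rw [hn, hdec]
    simp only [eta, mcross, Pi.add_apply, Pi.sub_apply, Pi.smul_apply,
      smul_eq_mul, Matrix.cons_val_zero, Matrix.cons_val_one, Matrix.head_cons,
      Matrix.cons_val_two, Matrix.tail_cons]
    simp only [eta] at hxw hx
    linear_combination (t + Δt + σ + τ) * hxw + (-(t + σ)) * hx +
      (-Real.cosh ρ) * hΔt + (-(t + σ)) * hcs
  rw [h1, h2, div_eq_div_iff (by nlinarith) hden.ne']
  ring
end
end

section
/- Let ρ > 0, σ, ν, t ∈ ℝ with t + σ ≥ 0 and (t+σ)² + ν² > 0. Then the relative frequency of the returning lightray satisfies the strict redshift inequality: √((t+σ)² + ν²) / ( cosh ρ · √((t+σ)² + ν²) + sinh ρ · (t+σ) ) < 1. -/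
/-- the strict redshift inequality f_r/f_e < 1. -/
theorem redshift_inequality
    (ρ σ ν t : ℝ) (hρ : 0 < ρ) (hts : 0 ≤ t + σ)
    (hpos : 0 < (t + σ) ^ 2 + ν ^ 2) :
    Real.sqrt ((t + σ) ^ 2 + ν ^ 2)
      / (Real.cosh ρ * Real.sqrt ((t + σ) ^ 2 + ν ^ 2)
          + Real.sinh ρ * (t + σ)) < 1 := by
  set s := Real.sqrt ((t + σ) ^ 2 + ν ^ 2) with hs
  have hspos : 0 < s := Real.sqrt_pos.mpr hpos
  have hcosh : 1 < Real.cosh ρ := Real.one_lt_cosh.mpr hρ.ne'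
  have hsinh : 0 < Real.sinh ρ := Real.sinh_pos_iff.mpr hρ
  have hden : s < Real.cosh ρ * s + Real.sinh ρ * (t + σ) := by
    nlinarith
  rw [div_lt_one (lt_trans hspos hden)]
  exact hden
end

section
/- In the conformally static case σ = τ = ν = 0, the measurements associated with the returning lightray do not vary with the emission time t > 0: the relative frequency equals √((t+σ)² + ν²) / ( cosh ρ·√((t+σ)² + ν²) + sinh ρ·(t+σ) ) = e^{−ρ} for all t > 0, and the emission angle φ determined by tan φ = ν/( sinh ρ·√((t+σ)² + ν²) ) vanishes for all t > 0, so the direction of emission P(v·x)/‖P(v·x)‖ is independent of t. -/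
/-- in the conformally static case σ = τ = ν = 0 the
measurements do not vary with the emission time: the relative frequency
equals e^{−ρ} and the emission angle φ (with tan φ = ν/(sinh ρ·√((t+σ)²+ν²)),
φ ∈ (−π/2, π/2), i.e. φ = arctan(...)) vanishes for all t > 0. -/
theorem measurements_conformally_static
    (ρ σ τ ν : ℝ) (hρ : 0 < ρ) (hσ : σ = 0) (hτ : τ = 0) (hν : ν = 0) :
    ∀ t : ℝ, 0 < t →
      Real.sqrt ((t + σ) ^ 2 + ν ^ 2)
          / (Real.cosh ρ * Real.sqrt ((t + σ) ^ 2 + ν ^ 2)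
              + Real.sinh ρ * (t + σ))
        = Real.exp (-ρ) ∧
      Real.arctan (ν / (Real.sinh ρ * Real.sqrt ((t + σ) ^ 2 + ν ^ 2))) = 0 := by
  subst hσ hν
  intro t ht
  have hs : Real.sqrt ((t + 0) ^ 2 + 0 ^ 2) = t := by
    rw [add_zero]
    simpa using Real.sqrt_sq ht.le
  constructor
  · rw [hs, add_zero]
    have hden : Real.cosh ρ * t + Real.sinh ρ * t = Real.exp ρ * t := by
      rw [Real.cosh_eq, Real.sinh_eq]; ring
    rw [hden, Real.exp_neg]
    field_simp
  · simp
end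

section
/- Let x be a future-directed unit timelike vector in ℝ³ and v ∈ SO⁺(2,1) with v·x ≠ x. Then the three vectors v·x − x, v·x, and x ∧ v·x form a basis of ℝ³. In particular, for any vector d ∈ ℝ³ there exist unique σ, τ, ν ∈ ℝ with d = σ(v·x − x) + τ·v·x + ν·(x ∧ v·x). -/
open Matrix Real

noncomputable section

lemma eta_sq : etaMat * etaMat = 1 := by
  ext i j; fin_cases i <;> fin_cases j <;>
    simp [etaMat, Matrix.mul_apply, Fin.sum_univ_three, Matrix.one_apply]

lemma row_rel (v : Matrix (Fin 3) (Fin 3) ℝ) (h : vᵀ * etaMat * v = etaMat) :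
    v * etaMat * vᵀ = etaMat := by
  have h1 : (etaMat * vᵀ * etaMat) * v = 1 := by
    calc (etaMat * vᵀ * etaMat) * v = etaMat * (vᵀ * etaMat * v) := by
          simp only [Matrix.mul_assoc]
    _ = 1 := by rw [h, eta_sq]
  have h2 : v * (etaMat * vᵀ * etaMat) = 1 := mul_eq_one_comm.mp h1
  calc v * etaMat * vᵀ = v * (etaMat * vᵀ * etaMat) * etaMat := by
        rw [Matrix.mul_assoc, Matrix.mul_assoc, Matrix.mul_assoc, eta_sq]
        simp [Matrix.mul_assoc]
    _ = etaMat := by rw [h2, Matrix.one_mul]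

lemma eta_invariant (x : Fin 3 → ℝ) (v : Matrix (Fin 3) (Fin 3) ℝ)
    (h : vᵀ * etaMat * v = etaMat) :
    eta (v.mulVec x) (v.mulVec x) = eta x x := by
  have e : ∀ i j : Fin 3, -(v 0 i * v 0 j) + v 1 i * v 1 j + v 2 i * v 2 j = etaMat i j := by
    intro i j
    have := congrFun (congrFun h i) j
    simpa [etaMat, Matrix.mul_apply, Fin.sum_univ_three] using this
  have e00 := e 0 0; have e01 := e 0 1; have e02 := e 0 2
  have e11 := e 1 1; have e12 := e 1 2; have e22 := e 2 2
  simp [etaMat, Matrix.diagonal_apply, Fin.ext_iff] at e00 e01 e02 e11 e12 e22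
  simp only [eta, Matrix.mulVec, dotProduct, Fin.sum_univ_three]
  linear_combination (x 0 * x 0) * e00 + (2 * x 0 * x 1) * e01 + (2 * x 0 * x 2) * e02
    + (x 1 * x 1) * e11 + (2 * x 1 * x 2) * e12 + (x 2 * x 2) * e22

lemma det_formula (x y : Fin 3 → ℝ) :
    (Matrix.of ![y - x, y, mcross x y]).det =
      eta x x * eta y y - (eta x y)^2 := by
  simp [Matrix.det_fin_three, mcross, eta]; ring


lemma aux_time_pos (a b c p q r : ℝ) (h1 : a^2 = 1 + b^2 + c^2) (ha : 0 < a)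
    (h2 : p^2 = 1 + q^2 + r^2) (hp : 0 < p) : 0 < a*p + b*q + c*r := by
  nlinarith [sq_nonneg (b*r - c*q), sq_nonneg (b*q + c*r), mul_pos ha hp,
    sq_nonneg (a*p - b*q - c*r), sq_nonneg (a - p), sq_nonneg (a + p)]

lemma aux_t_le (x0 x1 x2 y0 y1 y2 : ℝ) (hx : x0^2 = 1 + x1^2 + x2^2)
    (hy : y0^2 = 1 + y1^2 + y2^2) (hx0 : 0 < x0) (hy0 : 0 < y0) :
    -(x0*y0) + x1*y1 + x2*y2 ≤ -1 := by
  nlinarith [sq_nonneg (x1*y2 - x2*y1), sq_nonneg (x1 - y1), sq_nonneg (x2 - y2),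
    mul_pos hx0 hy0, sq_nonneg (x0*y0 - 1 - x1*y1 - x2*y2), sq_nonneg (x0 - y0)]

lemma aux_eq_case (x0 x1 x2 y0 y1 y2 : ℝ) (hx : x0^2 = 1 + x1^2 + x2^2)
    (hy : y0^2 = 1 + y1^2 + y2^2) (ht : -(x0*y0) + x1*y1 + x2*y2 = -1) :
    x0 = y0 ∧ x1 = y1 ∧ x2 = y2 := by
  have ht' : x0*y0 = 1 + x1*y1 + x2*y2 := by linarith
  have hs : (x1 - y1)^2 + (x2 - y2)^2 + (x1*y2 - x2*y1)^2 = 0 := by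
    linear_combination (-(y0^2)) * hx - (1+x1^2+x2^2) * hy + (x0*y0+1+x1*y1+x2*y2) * ht'
  have h1 : x1 = y1 := by
    nlinarith [sq_nonneg (x1-y1), sq_nonneg (x2-y2), sq_nonneg (x1*y2-x2*y1)]
  have h2 : x2 = y2 := by
    nlinarith [sq_nonneg (x1-y1), sq_nonneg (x2-y2), sq_nonneg (x1*y2-x2*y1)]
  have h0 : x0 = y0 := by nlinarith [sq_nonneg (x0-y0), sq_nonneg (x0+y0)]
  exact ⟨h0, h1, h2⟩

/-- the vectors v·x − x, v·x, x∧v·x form a basis of ℝ³, so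
every vector d has a unique decomposition d = σ(v·x−x) + τ·v·x + ν·(x∧v·x). -/
theorem holonomy_basis
    (x : Fin 3 → ℝ) (v : Matrix (Fin 3) (Fin 3) ℝ)
    (hx : eta x x = -1) (hxfut : 0 < x 0)
    (hv : IsPOLorentz v) (hvx : v.mulVec x ≠ x) :
    LinearIndependent ℝ ![v.mulVec x - x, v.mulVec x, mcross x (v.mulVec x)] ∧
    Submodule.span ℝ
        (Set.range ![v.mulVec x - x, v.mulVec x, mcross x (v.mulVec x)]) = ⊤ ∧
    ∀ d : Fin 3 → ℝ, ∃! c : ℝ × ℝ × ℝ,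
      d = c.1 • (v.mulVec x - x) + c.2.1 • v.mulVec x
            + c.2.2 • mcross x (v.mulVec x) := by
  obtain ⟨hvl, hvdet, hv00⟩ := hv
  have hyy0 : eta (v.mulVec x) (v.mulVec x) = -1 := by rw [eta_invariant x v hvl, hx]
  obtain ⟨y, hydef⟩ : ∃ y, v.mulVec x = y := ⟨_, rfl⟩
  have hy0e : y 0 = v 0 0 * x 0 + v 0 1 * x 1 + v 0 2 * x 2 := by
    rw [← hydef]; simp [Matrix.mulVec, dotProduct, Fin.sum_univ_three]
  rw [hydef] at hvx hyy0 ⊢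
  -- basic scalar facts
  have hxx : x 0 ^ 2 = 1 + x 1 ^ 2 + x 2 ^ 2 := by
    simp only [eta] at hx; nlinarith [hx]
  have hyy : eta y y = -1 := hyy0
  have hyy' : y 0 ^ 2 = 1 + y 1 ^ 2 + y 2 ^ 2 := by
    simp only [eta] at hyy; nlinarith [hyy]
  -- y 0 > 0 (orthochronous)
  have hrow : -(v 0 0 * v 0 0) + v 0 1 * v 0 1 + v 0 2 * v 0 2 = -1 := by
    have := congrFun (congrFun (row_rel v hvl) 0) 0
    simpa [etaMat, Matrix.mul_apply, Fin.sum_univ_three] using this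
  have hy0 : 0 < y 0 := by
    rw [hy0e]
    exact aux_time_pos _ _ _ _ _ _ (by nlinarith [hrow]) hv00 hxx hxfut
  -- η(x,y) < -1
  have ht_le : eta x y ≤ -1 :=
    aux_t_le (x 0) (x 1) (x 2) (y 0) (y 1) (y 2) hxx hyy' hxfut hy0
  have ht_ne : eta x y ≠ -1 := by
    intro ht
    simp only [eta] at ht
    obtain ⟨h0, h1, h2⟩ := aux_eq_case (x 0) (x 1) (x 2) (y 0) (y 1) (y 2) hxx hyy' ht
    apply hvx
    funext i
    fin_cases i <;> simp [h0.symm, h1.symm, h2.symm]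
  have ht : eta x y < -1 := lt_of_le_of_ne ht_le ht_ne
  -- the matrix of the three vectors is invertible
  set M : Matrix (Fin 3) (Fin 3) ℝ := Matrix.of ![y - x, y, mcross x y] with hM
  have hMdet : M.det ≠ 0 := by
    rw [hM, det_formula, hx, hyy]
    nlinarith [ht]
  have hMunit : IsUnit M := isUnit_iff_isUnit_det M |>.mpr (isUnit_iff_ne_zero.mpr hMdet)
  have hli : LinearIndependent ℝ ![y - x, y, mcross x y] := by
    have := Matrix.linearIndependent_rows_iff_isUnit.mpr hMunit
    exact this
  have hcard : Fintype.card (Fin 3) = Module.finrank ℝ (Fin 3 → ℝ) := by simp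
  have hspan : Submodule.span ℝ (Set.range ![y - x, y, mcross x y]) = ⊤ :=
    hli.span_eq_top_of_card_eq_finrank hcard
  refine ⟨hli, hspan, fun d => ?_⟩
  -- existence
  have hd : d ∈ Submodule.span ℝ (Set.range ![y - x, y, mcross x y]) := by
    rw [hspan]; trivial
  rw [Submodule.mem_span_range_iff_exists_fun ℝ] at hd
  obtain ⟨c, hc⟩ := hd
  rw [Fin.sum_univ_three] at hc
  simp only [Matrix.cons_val_zero, Matrix.cons_val_one, Matrix.head_cons,
    Matrix.cons_val_two, Matrix.tail_cons] at hc
  refine ⟨(c 0, c 1, c 2), hc.symm, ?_⟩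
  -- uniqueness
  rintro ⟨σ, τ, ν⟩ hστν
  simp only at hστν
  have hzero : (![σ - c 0, τ - c 1, ν - c 2] 0) • (y - x) + (![σ - c 0, τ - c 1, ν - c 2] 1) • y
      + (![σ - c 0, τ - c 1, ν - c 2] 2) • mcross x y = 0 := by
    simp only [Matrix.cons_val_zero, Matrix.cons_val_one, Matrix.head_cons,
      Matrix.cons_val_two, Matrix.tail_cons, sub_smul]
    have : σ • (y - x) + τ • y + ν • mcross x y = c 0 • (y - x) + c 1 • y + c 2 • mcross x y := by
      rw [← hστν, ← hc]
    abel_nf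
    abel_nf at this
    linear_combination (norm := abel) this
  have := Fintype.linearIndependent_iff.mp hli ![σ - c 0, τ - c 1, ν - c 2] (by
    rw [Fin.sum_univ_three]
    simpa using hzero)
  have h0 := this 0; have h1 := this 1; have h2 := this 2
  simp at h0 h1 h2
  ext <;> simp <;> [linarith [h0]; linarith [h1]; linarith [h2]]
end
end
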